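/- Let F be a field with char F ≠ 2 and char F ≠ 3, let α₁ ∈ F, and let A = A₅(α₁) = [[α₁, 0, 0, 0],[1, 2α₁-1, 1-α₁, 0]]. Then the invertible 2×2 matrices g over F with gA = A(g⊗g) are exactly the matrices [[1,0],[c,1]] with c ∈ F, and the 2×2 matrices D with DA = A(D⊗I₂ + I₂⊗D) are exactly the matrices [[0,0],[c,0]] with c ∈ F. -/
import Mathlib


open Matrix Kronecker

/-- The matrix of structure constants (MSC) of a 2-dimensional algebra, as a
`2 × (2 × 2)` matrix: the column indexed by `(j,k)` corresponds to the product
`e_j · e_k`, so the columns in order `(0,0), (0,1), (1,0), (1,1)` carry the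
entries `α₁ α₂ α₃ α₄` (first row) and `β₁ β₂ β₃ β₄` (second row). -/
def MSC {F : Type*} [Field F] (a1 a2 a3 a4 b1 b2 b3 b4 : F) :
    Matrix (Fin 2) (Fin 2 × Fin 2) F :=
  Matrix.of fun i j => !![a1, a2, a3, a4; b1, b2, b3, b4] i (finProdFinEquiv j)

/-- `g` is an automorphism matrix of the algebra with MSC `A`:
`g` is invertible and `g • A = A • (g ⊗ g)`. -/
def IsAutoMat {F : Type*} [Field F] (A : Matrix (Fin 2) (Fin 2 × Fin 2) F)
    (g : Matrix (Fin 2) (Fin 2) F) : Prop :=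
  IsUnit g ∧ g * A = A * (g ⊗ₖ g)

/-- `D` is a derivation matrix of the algebra with MSC `A`:
`D • A = A • (D ⊗ I + I ⊗ D)`. -/
def IsDerMat {F : Type*} [Field F] (A : Matrix (Fin 2) (Fin 2 × Fin 2) F)
    (D : Matrix (Fin 2) (Fin 2) F) : Prop :=
  D * A = A * (D ⊗ₖ (1 : Matrix (Fin 2) (Fin 2) F) + (1 : Matrix (Fin 2) (Fin 2) F) ⊗ₖ D)

set_option maxHeartbeats 1000000 in
theorem stmt_6 {F : Type*} [Field F] (h2 : ringChar F ≠ 2) (h3 : ringChar F ≠ 3)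
    (a1 : F)
    (A : Matrix (Fin 2) (Fin 2 × Fin 2) F)
    (hA : A = MSC a1 0 0 0 1 (2 * a1 - 1) (1 - a1) 0) :
    (∀ g : Matrix (Fin 2) (Fin 2) F,
      IsAutoMat A g ↔ ∃ c : F, g = !![1, 0; c, 1]) ∧
    (∀ D : Matrix (Fin 2) (Fin 2) F,
      IsDerMat A D ↔ ∃ c : F, D = !![0, 0; c, 0]) := by
  subst hA
  constructor
  · intro g
    constructor
    · rintro ⟨hu, hg⟩
      have e0 := congrFun (congrFun hg 0) (0,0)
      have e3 := congrFun (congrFun hg 0) (1,1)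
      have e4 := congrFun (congrFun hg 1) (0,0)
      have e5 := congrFun (congrFun hg 1) (0,1)
      have e6 := congrFun (congrFun hg 1) (1,0)
      norm_num [MSC, Matrix.mul_apply, Fin.sum_univ_two, Fintype.sum_prod_type,
        Matrix.kroneckerMap_apply, finProdFinEquiv] at e0 e3 e4 e5 e6
      have hb : g 0 1 = 0 := by
        rcases e3 with h | h
        · rw [h] at e0; linear_combination e0
        · exact h
      have hdet : g 0 0 * g 1 1 - g 0 1 * g 1 0 ≠ 0 := by
        have := ((Matrix.isUnit_iff_isUnit_det g).mp hu).ne_zero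
        rwa [Matrix.det_fin_two] at this
      have hd : g 1 1 ≠ 0 := by
        intro h; apply hdet; rw [h, hb]; ring
      rw [hb] at e5 e6
      have h5 : (2 * a1 - 1) * (g 1 1 * (1 - g 0 0)) = 0 := by linear_combination e5
      have h6 : (1 - a1) * (g 1 1 * (1 - g 0 0)) = 0 := by linear_combination e6
      have hu0 : g 1 1 * (1 - g 0 0) = 0 := by linear_combination h5 + 2 * h6
      have ha : g 0 0 = 1 := by
        rcases mul_eq_zero.mp hu0 with h | h
        · exact absurd h hd
        · linear_combination -h
      rw [ha] at e4
      have hd1 : g 1 1 = 1 := by linear_combination e4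
      exact ⟨g 1 0, by ext i j; fin_cases i <;> fin_cases j <;> simp [ha, hb, hd1]⟩
    · rintro ⟨c, rfl⟩
      constructor
      · rw [Matrix.isUnit_iff_isUnit_det]
        simp [Matrix.det_fin_two_of]
      · ext i p
        fin_cases i <;> fin_cases p <;>
          norm_num [MSC, Matrix.mul_apply, Fin.sum_univ_two, Fintype.sum_prod_type,
            Matrix.kroneckerMap_apply, finProdFinEquiv] <;> ring
  · intro D
    constructor
    · intro hD
      have e0 := congrFun (congrFun hD 0) (0,0)
      have e4 := congrFun (congrFun hD 1) (0,0)
      have e6 := congrFun (congrFun hD 1) (1,0)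
      norm_num [MSC, Matrix.mul_apply, Fin.sum_univ_two, Fintype.sum_prod_type,
        Matrix.kroneckerMap_apply, Matrix.one_apply, finProdFinEquiv] at e0 e4 e6
      have ha : D 0 0 = 0 := by linear_combination -e0 - e6
      have hb : D 0 1 = 0 := by linear_combination e0 + a1 * ha
      have hd : D 1 1 = 0 := by linear_combination e4 + 2 * ha
      exact ⟨D 1 0, by ext i j; fin_cases i <;> fin_cases j <;> simp [ha, hb, hd]⟩
    · rintro ⟨c, rfl⟩
      ext i p
      fin_cases i <;> fin_cases p <;>
        norm_num [MSC, Matrix.mul_apply, Fin.sum_univ_two, Fintype.sum_prod_type,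
          Matrix.kroneckerMap_apply, Matrix.one_apply, finProdFinEquiv] <;> ring
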